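/- arXiv:2512.22809 — 3 statements merged into one kernel-verified Lean document; each statement's English description precedes it below -/
import Mathlib

section
/- If a graph G admits an (s_1, s_2, ..., s_k)-packing coloring, then the subdivision S(G) of G admits a (1, 2s_1+1, 2s_2+1, ..., 2s_k+1)-packing coloring. -/
def IsPackingColoring {V : Type*} (G : SimpleGraph V) {k : ℕ} (s : Fin k → ℕ)
    (f : V → Fin k) : Prop :=
  ∀ u v : V, u ≠ v → f u = f v → G.Reachable u v → s (f u) + 1 ≤ G.dist u v

/-- The subdivision `S(G)` of `G`: each edge `uv` is replaced by a path `u-w-v`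
through a new vertex `w` (one new vertex per edge of `G`). -/
def subdivision {V : Type*} (G : SimpleGraph V) : SimpleGraph (V ⊕ G.edgeSet) :=
  SimpleGraph.fromRel (fun x y =>
    match x, y with
    | Sum.inl u, Sum.inr e => u ∈ (e.1 : Sym2 V)
    | _, _ => False)

section Aux
variable {V : Type*} {G : SimpleGraph V}

lemma subdiv_not_adj_inl_inl (u v : V) : ¬ (subdivision G).Adj (Sum.inl u) (Sum.inl v) := by
  simp [subdivision, SimpleGraph.fromRel_adj]

lemma subdiv_not_adj_inr_inr (e e' : G.edgeSet) :
    ¬ (subdivision G).Adj (Sum.inr e) (Sum.inr e') := by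
  simp [subdivision, SimpleGraph.fromRel_adj]

lemma subdiv_adj_inl_inr {u : V} {e : G.edgeSet} :
    (subdivision G).Adj (Sum.inl u) (Sum.inr e) ↔ u ∈ (e.1 : Sym2 V) := by
  simp [subdivision, SimpleGraph.fromRel_adj]

lemma adj_of_mem {u w : V} {e : G.edgeSet} (hu : u ∈ (e.1 : Sym2 V))
    (hw : w ∈ (e.1 : Sym2 V)) (hne : u ≠ w) : G.Adj u w := by
  have : (e.1 : Sym2 V) = s(u, w) := (Sym2.mem_and_mem_iff hne).mp ⟨hu, hw⟩
  have he := e.2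
  rw [this] at he
  exact he

lemma subdiv_walk_proj : ∀ n (u v : V)
    (W : (subdivision G).Walk (Sum.inl u) (Sum.inl v)), W.length ≤ n →
    ∃ W' : G.Walk u v, 2 * W'.length ≤ W.length := by
  intro n
  induction n with
  | zero =>
    intro u v W hW
    have h0 : W.length = 0 := Nat.le_zero.mp hW
    have := W.eq_of_length_eq_zero h0
    injection this with huv
    subst huv
    exact ⟨.nil, by simp⟩
  | succ n ih =>
    intro u v W hW
    cases W with
    | nil => exact ⟨.nil, by simp⟩
    | @cons _ x _ hadj p =>
      cases x with
      | inl w => exact absurd hadj (subdiv_not_adj_inl_inl u w)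
      | inr e =>
        cases p with
        | @cons _ y _ hadj2 q =>
          cases y with
          | inr e' => exact absurd hadj2 (subdiv_not_adj_inr_inr e e')
          | inl w =>
            have hq : q.length ≤ n := by
              simp only [SimpleGraph.Walk.length_cons] at hW
              omega
            obtain ⟨W', hW'⟩ := ih w v q hq
            by_cases huw : u = w
            · subst huw
              exact ⟨W', by simp only [SimpleGraph.Walk.length_cons]; omega⟩
            · have hue : u ∈ (e.1 : Sym2 V) := subdiv_adj_inl_inr.mp hadj
              have hwe : w ∈ (e.1 : Sym2 V) := subdiv_adj_inl_inr.mp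
                ((subdivision G).adj_symm hadj2)
              refine ⟨.cons (adj_of_mem hue hwe huw) W', ?_⟩
              simp only [SimpleGraph.Walk.length_cons]
              omega

end Aux

/-- If `G` is `(s₁,…,s_k)`-packing colorable, then `S(G)` is
`(1, 2s₁+1, …, 2s_k+1)`-packing colorable. -/
theorem subdivision_packing {V : Type*} (G : SimpleGraph V) {k : ℕ} (s : Fin k → ℕ)
    (h : ∃ f : V → Fin k, IsPackingColoring G s f) :
    ∃ g : V ⊕ G.edgeSet → Fin (k + 1),
      IsPackingColoring (subdivision G) (Fin.cons 1 (fun i => 2 * s i + 1)) g := by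
  obtain ⟨f, hf⟩ := h
  refine ⟨Sum.elim (fun u => (f u).succ) (fun _ => 0), ?_⟩
  rintro (u | e) (v | e') hne hcol hreach
  · -- both original vertices
    simp only [Sum.elim_inl] at hcol ⊢
    have hfuv : f u = f v := Fin.succ_injective _ hcol
    have huv : u ≠ v := fun hh => hne (by rw [hh])
    obtain ⟨W, hWlen⟩ := hreach.exists_walk_length_eq_dist
    obtain ⟨W', hW'⟩ := subdiv_walk_proj W.length u v W le_rfl
    have hGreach : G.Reachable u v := ⟨W'⟩
    have hdist : G.dist u v ≤ W'.length := SimpleGraph.dist_le W'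
    have hkey := hf u v huv hfuv hGreach
    rw [Fin.cons_succ]
    omega
  · simp [Sum.elim_inl, Sum.elim_inr, Fin.succ_ne_zero] at hcol
  · simp [Sum.elim_inl, Sum.elim_inr, (Fin.succ_ne_zero _).symm] at hcol
  · -- both new vertices
    simp only [Sum.elim_inr, Fin.cons_zero]
    have hnadj : ¬ (subdivision G).Adj (Sum.inr e) (Sum.inr e') :=
      subdiv_not_adj_inr_inr e e'
    have h1 : (subdivision G).dist (Sum.inr e) (Sum.inr e') ≠ 0 := by
      simp [SimpleGraph.dist_eq_zero_iff_eq_or_not_reachable, hne, hreach]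
    have h2 : (subdivision G).dist (Sum.inr e) (Sum.inr e') ≠ 1 := by
      intro hh
      exact hnadj (SimpleGraph.dist_eq_one_iff_adj.mp hh)
    omega
end

section
/- Let G be a Halin graph with maximum degree at most 5, with characteristic tree T and adjoint cycle C = a_1 a_2 ... a_n a_1, and for each i let b_i be the unique neighbor of a_i in T. Then for every vertex b of T, the number of cycle vertices a_j adjacent to b that lie in a fixed color class assigned only colors from {2_a, 2_b, 2_c} under the recoloring algorithm is at most 3; more precisely, any vertex b_i has at most 3 neighbors among the recolored (color-2) cycle vertices, because if b_i had 4 such neighbors a_i, a_j, a_k, a_l with i<j<k<l, at most one of the gaps j−i, k−j, l−k equals 1, forcing two internal tree paths from b_i and hence degree at least 6. -/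
/-- `IsHalin G T a` : `G` is a Halin graph with characteristic tree `T` and
adjoint cycle `a 0, a 1, …, a (n-1)` through the leaves of `T`, listed in the
cyclic order of a planar embedding.  Planarity of the embedding is recorded by
the field `planar`: for every oriented tree edge `(u,v)`, the leaves lying in
the component of `v` after deleting that edge form a cyclic interval (arc) of
the cyclic order `a`. -/
structure IsHalin {V : Type*} (G T : SimpleGraph V) {n : ℕ} [NeZero n]
    (a : Fin n → V) : Prop where
  /-- `T` is a (spanning) tree. -/
  tree : T.IsTree
  /-- `T` is a subgraph of `G`. -/
  tree_le : T ≤ G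
  /-- The tree has at least 4 vertices. -/
  card_ge : 4 ≤ Nat.card V
  /-- `T` has no vertex of degree 2. -/
  no_deg2 : ∀ v : V, (T.neighborSet v).ncard ≠ 2
  /-- The cycle vertices are pairwise distinct. -/
  a_inj : Function.Injective a
  /-- The vertices `a i` are exactly the leaves of `T`. -/
  leaves : ∀ v : V, (T.neighborSet v).ncard = 1 ↔ v ∈ Set.range a
  /-- Consecutive leaves are joined by the adjoint cycle. -/
  cycle_adj : ∀ i : Fin n, G.Adj (a i) (a (i + 1))
  /-- Every edge of `G` is a tree edge or an adjoint-cycle edge. -/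
  edge_cases : ∀ u v : V, G.Adj u v → T.Adj u v ∨
      ∃ i : Fin n, (u = a i ∧ v = a (i + 1)) ∨ (v = a i ∧ u = a (i + 1))
  /-- Planarity: for each oriented tree edge `(u,v)`, the leaves on the `v`-side
  of the edge form a cyclic interval of the cyclic order `a`. -/
  planar : ∀ u v : V, T.Adj u v → ∃ st len : ℕ,
      {i : Fin n | (T.deleteEdges {s(u, v)}).Reachable (a i) v} =
        {i : Fin n | ∃ m : ℕ, m < len ∧ i = (Fin.ofNat n st) + (Fin.ofNat n m)}

/-- An arc (cyclic interval) of `Fin n` cannot alternate out/in/out/in along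
four increasing values. -/
lemma halin_aux_arc {n : ℕ} [NeZero n] (st x1 x2 x3 x4 : Fin n) (len : ℕ)
    (h12 : x1.val < x2.val) (h23 : x2.val < x3.val) (h34 : x3.val < x4.val)
    (h1 : len ≤ (x1 - st).val) (h2 : (x2 - st).val < len)
    (h3 : len ≤ (x3 - st).val) (h4 : (x4 - st).val < len) : False := by
  fin_omega

/-- Membership in an arc, rephrased. -/
lemma halin_aux_mem {n : ℕ} [NeZero n] (st x : Fin n) (len : ℕ) :
    (∃ m : ℕ, m < len ∧ x = (st : Fin n) + Fin.ofNat n m) ↔ (x - st).val < len := by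
  constructor
  · rintro ⟨m, hm, rfl⟩
    have h1 : (st : Fin n) + Fin.ofNat n m - st = Fin.ofNat n m := by abel
    rw [h1, Fin.val_ofNat]
    exact lt_of_le_of_lt (Nat.mod_le _ _) hm
  · intro hx
    refine ⟨(x - st).val, hx, ?_⟩
    rw [Fin.ofNat_val_eq_self]
    abel

/-- In an acyclic graph, a neighbor `x ≠ c` of `b` cannot reach `c` after the
edge `bc` is deleted. -/
lemma halin_aux_sep {V : Type*} {T : SimpleGraph V} (hT : T.IsAcyclic) {b c x : V}
    (hbc : T.Adj b c) (hbx : T.Adj b x) (hxc : x ≠ c) :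
    ¬ (T.deleteEdges {s(b,c)}).Reachable x c := by
  intro hr
  have hbridge := (SimpleGraph.isAcyclic_iff_forall_adj_isBridge.mp hT) hbc
  rw [SimpleGraph.isBridge_iff] at hbridge
  apply hbridge
  have hadj : (T.deleteEdges {s(b,c)}).Adj b x := by
    rw [SimpleGraph.deleteEdges_adj]
    refine ⟨hbx, ?_⟩
    simp only [Set.mem_singleton_iff, Sym2.eq, Sym2.rel_iff', Prod.mk.injEq, Prod.swap_prod_mk]
    push_neg
    exact ⟨fun _ => hxc, fun hb => absurd hb hbc.ne⟩
  exact hadj.reachable.trans hr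

/-- The first step of a path from `b` to `w` in a connected graph: there is a
neighbor `c` of `b` such that `w` reaches `c` avoiding the edge `bc`; moreover
if all neighbors of `c` equal `b` then `c = w`. -/
lemma halin_aux_gap {V : Type*} [DecidableEq V] {T : SimpleGraph V} (hconn : T.Connected)
    {b w : V} (hne : b ≠ w) :
    ∃ c, T.Adj b c ∧ (T.deleteEdges {s(b,c)}).Reachable w c ∧
      ((∀ d, T.Adj c d → d = b) → c = w) := by
  obtain ⟨q⟩ := hconn.preconnected b w
  obtain ⟨p, hp⟩ : ∃ p : T.Walk b w, p.IsPath := ⟨q.toPath.1, q.toPath.2⟩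
  cases p with
  | nil => exact absurd rfl hne
  | @cons _ c _ hadj q =>
    rw [SimpleGraph.Walk.cons_isPath_iff] at hp
    have hed : ∀ e ∈ q.edges, e ∉ ({s(b,c)} : Set (Sym2 V)) := by
      intro e he hmem
      rw [Set.mem_singleton_iff] at hmem; subst hmem
      exact hp.2 (q.fst_mem_support_of_mem_edges he)
    refine ⟨c, hadj, ⟨(q.toDeleteEdges _ hed).reverse⟩, ?_⟩
    intro hl
    cases q with
    | nil => rfl
    | @cons _ d _ h2 q2 =>
      have hd : d = b := hl _ h2
      subst hd
      exact absurd (by simp [SimpleGraph.Walk.support_cons]) hp.2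

set_option maxHeartbeats 1000000

/-- In a Halin graph with `Δ(G) ≤ 5`, any tree vertex `b` has at most 3
neighbors among a set `S` of cycle vertices in which at most one pair of
vertices is consecutive on the adjoint cycle (as is the case for the set of
neighbors of `b` receiving colors from `{2_a, 2_b, 2_c}` in the recoloring
algorithm). -/
theorem halin_at_most_three_colored_neighbors {V : Type*} (G T : SimpleGraph V)
    {n : ℕ} [NeZero n] (a : Fin n → V) (h : IsHalin G T a)
    (hdeg : ∀ v : V, (G.neighborSet v).ncard ≤ 5)
    (b : V) (S : Finset (Fin n))
    (hadj : ∀ j ∈ S, T.Adj b (a j))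
    (hcons : ∀ p q p' q' : Fin n, p ∈ S → q ∈ S → p' ∈ S → q' ∈ S →
      p.val + 1 = q.val → p'.val + 1 = q'.val → p = p' ∧ q = q') :
    S.card ≤ 3 := by
  classical
  by_contra hS
  push_neg at hS
  have hfin : Finite V := Nat.finite_of_card_ne_zero (by have := h.card_ge; omega)
  have hconn : T.Connected := h.tree.isConnected
  have hacy : T.IsAcyclic := h.tree.IsAcyclic
  -- extract the four smallest elements of S
  set L := S.sort (· ≤ ·) with hL
  have hlen : 4 ≤ L.length := by rw [hL, Finset.length_sort]; omega
  have hsort : L.Pairwise (· < ·) := (Finset.sortedLT_sort S).pairwise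
  have hsm : StrictMono L.get := fun x y hxy => hsort.rel_get_of_lt hxy
  set i : Fin n := L.get ⟨0, by omega⟩ with hi
  set j : Fin n := L.get ⟨1, by omega⟩ with hj
  set k : Fin n := L.get ⟨2, by omega⟩ with hk
  set l : Fin n := L.get ⟨3, by omega⟩ with hl
  have hiS : i ∈ S := Finset.mem_sort (α := Fin n) (· ≤ ·) |>.mp (L.get_mem _)
  have hjS : j ∈ S := Finset.mem_sort (α := Fin n) (· ≤ ·) |>.mp (L.get_mem _)
  have hkS : k ∈ S := Finset.mem_sort (α := Fin n) (· ≤ ·) |>.mp (L.get_mem _)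
  have hlS : l ∈ S := Finset.mem_sort (α := Fin n) (· ≤ ·) |>.mp (L.get_mem _)
  have hij : i < j := hsm (by simp [Fin.lt_def])
  have hjk : j < k := hsm (by simp [Fin.lt_def])
  have hkl : k < l := hsm (by simp [Fin.lt_def])
  have hvij : i.val < j.val := Fin.lt_def.mp hij
  have hvjk : j.val < k.val := Fin.lt_def.mp hjk
  have hvkl : k.val < l.val := Fin.lt_def.mp hkl
  -- no element of S lies strictly between consecutive chosen elements
  have hnb : ∀ (t : ℕ) (ht : t < 3) (s : Fin n), s ∈ S →
      ¬(L.get ⟨t, by omega⟩ < s ∧ s < L.get ⟨t+1, by omega⟩) := by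
    rintro t ht s hs ⟨h1, h2⟩
    obtain ⟨r, hr⟩ := List.mem_iff_get.mp (Finset.mem_sort (α := Fin n) (· ≤ ·) |>.mpr hs)
    rw [← hr] at h1 h2
    have hr1 : t < r.val := by simpa [Fin.lt_def] using hsm.lt_iff_lt.mp h1
    have hr2 : r.val < t + 1 := by simpa [Fin.lt_def] using hsm.lt_iff_lt.mp h2
    omega
  have hnb01 : ∀ s ∈ S, ¬(i < s ∧ s < j) := fun s hs hc => hnb 0 (by omega) s hs hc
  have hnb12 : ∀ s ∈ S, ¬(j < s ∧ s < k) := fun s hs hc => hnb 1 (by omega) s hs hc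
  have hnb23 : ∀ s ∈ S, ¬(k < s ∧ s < l) := fun s hs hc => hnb 2 (by omega) s hs hc
  -- b is not a leaf
  have hbna : b ∉ Set.range a := by
    intro hb
    have h1 : (T.neighborSet b).ncard = 1 := (h.leaves b).mpr hb
    have h2 : 1 < (T.neighborSet b).ncard := by
      rw [Set.one_lt_ncard (Set.toFinite _)]
      exact ⟨a i, hadj i hiS, a j, hadj j hjS, h.a_inj.ne hij.ne⟩
    omega
  -- key step: a big gap yields a tree-neighbor of b distinct from all a s, s ∈ S
  have hkey : ∀ (p q : Fin n), p ∈ S → q ∈ S → p.val + 2 ≤ q.val →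
      (∀ s ∈ S, ¬(p < s ∧ s < q)) →
      ∃ (c : V) (m : Fin n), T.Adj b c ∧
        (T.deleteEdges {s(b,c)}).Reachable (a m) c ∧
        p.val < m.val ∧ m.val < q.val ∧ (∀ s ∈ S, c ≠ a s) := by
    intro p q hpS hqS hgap hnbpq
    have hqn : q.val < n := q.isLt
    obtain ⟨m, hmval⟩ : ∃ m : Fin n, m.val = p.val + 1 := ⟨⟨p.val + 1, by omega⟩, rfl⟩
    have hmnS : m ∉ S := by
      intro hmS
      exact hnbpq m hmS ⟨Fin.lt_def.mpr (by omega), Fin.lt_def.mpr (by omega)⟩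
    have hbm : b ≠ a m := fun hb => hbna ⟨m, hb.symm⟩
    obtain ⟨c, hbc, hreach, hcl⟩ := halin_aux_gap hconn hbm
    refine ⟨c, m, hbc, hreach, by omega, by omega, ?_⟩
    intro s hsS hcs
    -- c = a s is a leaf, so all its neighbors are b, thus c = a m, i.e. s = m ∈ S
    have hleaf : (T.neighborSet (a s)).ncard = 1 := (h.leaves _).mpr ⟨s, rfl⟩
    obtain ⟨x, hx⟩ := Set.ncard_eq_one.mp hleaf
    have hbx : b ∈ T.neighborSet (a s) := (hadj s hsS).symm
    rw [hx, Set.mem_singleton_iff] at hbx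
    have hall : ∀ d, T.Adj c d → d = b := by
      intro d hd
      have : d ∈ T.neighborSet (a s) := by rw [← hcs]; exact hd
      rw [hx, Set.mem_singleton_iff] at this
      rw [this, hbx]
    have : c = a m := hcl hall
    rw [hcs] at this
    exact hmnS (h.a_inj this ▸ hsS)
  -- at most one of the three gaps is small
  have honesmall : ∀ p q p' q' : Fin n, p ∈ S → q ∈ S → p' ∈ S → q' ∈ S → p ≠ p' →
      p.val + 1 = q.val → p'.val + 1 = q'.val → False := by
    intro p q p' q' h1 h2 h3 h4 hne e1 e2
    exact hne (hcons p q p' q' h1 h2 h3 h4 e1 e2).1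
  -- nail down two big gaps (p1,q1), (p2,q2) with q1 ≤ p2
  have hbig : ∃ p1 q1 p2 q2 : Fin n, p1 ∈ S ∧ q1 ∈ S ∧ p2 ∈ S ∧ q2 ∈ S ∧
      p1.val + 2 ≤ q1.val ∧ p2.val + 2 ≤ q2.val ∧ q1.val ≤ p2.val ∧
      (∀ s ∈ S, ¬(p1 < s ∧ s < q1)) ∧ (∀ s ∈ S, ¬(p2 < s ∧ s < q2)) := by
    by_cases hs0 : i.val + 1 = j.val
    · refine ⟨j, k, k, l, hjS, hkS, hkS, hlS, ?_, ?_, le_refl _, hnb12, hnb23⟩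
      · by_contra hc
        push_neg at hc
        exact honesmall i j j k hiS hjS hjS hkS hij.ne hs0 (by omega)
      · by_contra hc
        push_neg at hc
        exact honesmall i j k l hiS hjS hkS hlS (hij.trans hjk).ne hs0 (by omega)
    · by_cases hs1 : j.val + 1 = k.val
      · refine ⟨i, j, k, l, hiS, hjS, hkS, hlS, by omega, ?_, by omega, hnb01, hnb23⟩
        by_contra hc
        push_neg at hc
        exact honesmall j k k l hjS hkS hkS hlS hjk.ne hs1 (by omega)
      · exact ⟨i, j, j, k, hiS, hjS, hjS, hkS, by omega, by omega, le_refl _,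
          hnb01, hnb12⟩
  obtain ⟨p1, q1, p2, q2, hp1S, hq1S, hp2S, hq2S, hbig1, hbig2, hq1p2, hnbg1, hnbg2⟩ := hbig
  obtain ⟨c1, m1, hbc1, hre1, hpm1, hmq1, hc1ne⟩ := hkey p1 q1 hp1S hq1S hbig1 hnbg1
  obtain ⟨c2, m2, hbc2, hre2, hpm2, hmq2, hc2ne⟩ := hkey p2 q2 hp2S hq2S hbig2 hnbg2
  -- c1 ≠ c2 by planarity
  have hc12 : c1 ≠ c2 := by
    intro hc
    subst hc
    obtain ⟨st0, len, hset⟩ := h.planar b c1 hbc1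
    set st : Fin n := Fin.ofNat n st0 with hst
    have hiff : ∀ x : Fin n,
        (T.deleteEdges {s(b,c1)}).Reachable (a x) c1 ↔ (x - st).val < len := by
      intro x
      rw [show (T.deleteEdges {s(b,c1)}).Reachable (a x) c1 ↔ x ∈
          {i : Fin n | (T.deleteEdges {s(b, c1)}).Reachable (a i) c1} from Iff.rfl,
        hset]
      exact halin_aux_mem st x len
    have hm1' : (m1 - st).val < len := (hiff m1).mp hre1
    have hm2' : (m2 - st).val < len := (hiff m2).mp hre2
    have hq1' : len ≤ (q1 - st).val := by
      by_contra hc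
      push_neg at hc
      exact halin_aux_sep hacy hbc1 (hadj q1 hq1S) (fun he => hc1ne q1 hq1S he.symm)
        ((hiff q1).mpr hc)
    have hp1' : len ≤ (p1 - st).val := by
      by_contra hc
      push_neg at hc
      exact halin_aux_sep hacy hbc1 (hadj p1 hp1S) (fun he => hc1ne p1 hp1S he.symm)
        ((hiff p1).mpr hc)
    exact halin_aux_arc st p1 m1 q1 m2 len hpm1 hmq1 (by omega) hp1' hm1' hq1' hm2'
  -- the degree of b is at least 6
  have hsub : (↑({a i, a j, a k, a l, c1, c2} : Finset V) : Set V) ⊆ G.neighborSet b := by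
    intro x hx
    simp only [Finset.coe_insert, Set.mem_insert_iff, Finset.coe_singleton,
      Set.mem_singleton_iff] at hx
    rcases hx with rfl | rfl | rfl | rfl | rfl | rfl
    · exact h.tree_le (hadj i hiS)
    · exact h.tree_le (hadj j hjS)
    · exact h.tree_le (hadj k hkS)
    · exact h.tree_le (hadj l hlS)
    · exact h.tree_le hbc1
    · exact h.tree_le hbc2
  have hane : ∀ (x y : Fin n), x ≠ y → a x ≠ a y := fun x y hxy => h.a_inj.ne hxy
  have hcard6 : ({a i, a j, a k, a l, c1, c2} : Finset V).card = 6 := by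
    rw [Finset.card_insert_of_notMem (by
      simp only [Finset.mem_insert, Finset.mem_singleton]
      push_neg
      exact ⟨hane i j hij.ne, hane i k (hij.trans hjk).ne,
        hane i l ((hij.trans hjk).trans hkl).ne,
        fun he => hc1ne i hiS he.symm, fun he => hc2ne i hiS he.symm⟩)]
    rw [Finset.card_insert_of_notMem (by
      simp only [Finset.mem_insert, Finset.mem_singleton]
      push_neg
      exact ⟨hane j k hjk.ne, hane j l (hjk.trans hkl).ne,
        fun he => hc1ne j hjS he.symm, fun he => hc2ne j hjS he.symm⟩)]
    rw [Finset.card_insert_of_notMem (by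
      simp only [Finset.mem_insert, Finset.mem_singleton]
      push_neg
      exact ⟨hane k l hkl.ne,
        fun he => hc1ne k hkS he.symm, fun he => hc2ne k hkS he.symm⟩)]
    rw [Finset.card_insert_of_notMem (by
      simp only [Finset.mem_insert, Finset.mem_singleton]
      push_neg
      exact ⟨fun he => hc1ne l hlS he.symm, fun he => hc2ne l hlS he.symm⟩)]
    rw [Finset.card_insert_of_notMem (by simpa using hc12)]
    simp
  have h6 : 6 ≤ (G.neighborSet b).ncard := by
    calc 6 = (↑({a i, a j, a k, a l, c1, c2} : Finset V) : Set V).ncard := by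
            rw [Set.ncard_coe_finset, hcard6]
      _ ≤ (G.neighborSet b).ncard := Set.ncard_le_ncard hsub (Set.toFinite _)
  have := hdeg b
  omega
end

section
/- Let C_n be the cycle on n vertices with n ≥ 3. Then C_n admits a partition into two independent sets and at most three 2-independent sets; i.e., C_n is (1,1,2,2,2)-packing colorable for all n ≥ 3, and moreover C_n is (1,1,2,2)-packing colorable when n ≡ 0 (mod 4). -/
/-- The cycle on `ZMod n` (for `n ≥ 3` this is the cycle `C_n`). -/
def cyc (n : ℕ) : SimpleGraph (ZMod n) :=
  SimpleGraph.fromRel (fun i j => j = i + 1)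

namespace CyclePacking

theorem modred (x n : ℕ) (h : x < 2*n) (hn : 0 < n) : x % n = if x < n then x else x - n := by
  split
  · exact Nat.mod_eq_of_lt ‹_›
  · rw [Nat.mod_eq_sub_mod (by omega), Nat.mod_eq_of_lt (by omega)]

theorem key (n a b : ℕ) (hn : 3 ≤ n) (ha : a < n) (hb : b < n)
    (h4 : a % 4 = b % 4)
    (hA : ¬(a = n-1 ∧ n % 4 ≠ 0)) (hB : ¬(b = n-1 ∧ n % 4 ≠ 0)) :
    b ≠ (a+1) % n ∧ a ≠ (b+1) % n ∧
      (a % 4 = 1 ∨ a % 4 = 3 → b ≠ (a+2) % n ∧ a ≠ (b+2) % n) := by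
  rw [modred (a+1) n (by omega) (by omega), modred (b+1) n (by omega) (by omega),
      modred (a+2) n (by omega) (by omega), modred (b+2) n (by omega) (by omega)]
  split_ifs <;> omega

theorem two_le_dist {V : Type*} {G : SimpleGraph V} {u v : V} (h : G.Reachable u v)
    (hne : u ≠ v) (hadj : ¬G.Adj u v) : 2 ≤ G.dist u v := by
  obtain ⟨p, hp⟩ := h.exists_walk_length_eq_dist
  rcases p with _ | ⟨h₁, _ | ⟨h₂, q⟩⟩
  · exact absurd rfl hne
  · exact absurd (by simpa using h₁) hadj
  · simp only [SimpleGraph.Walk.length_cons] at hp; omega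

theorem three_le_dist {V : Type*} {G : SimpleGraph V} {u v : V} (h : G.Reachable u v)
    (hne : u ≠ v) (hadj : ¬G.Adj u v) (hw : ∀ w, G.Adj u w → ¬ G.Adj w v) :
    3 ≤ G.dist u v := by
  obtain ⟨p, hp⟩ := h.exists_walk_length_eq_dist
  rcases p with _ | ⟨h₁, _ | ⟨h₂, q⟩⟩
  · exact absurd rfl hne
  · exact absurd (by simpa using h₁) hadj
  · rcases q with _ | ⟨h₃, q⟩
    · exact absurd h₂ (hw _ h₁)
    · simp only [SimpleGraph.Walk.length_cons] at hp; omega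

theorem addc (n c : ℕ) [NeZero n] (hc : c < n) (u v : ZMod n) :
    v = u + (c : ZMod n) ↔ v.val = (u.val + c) % n := by
  constructor
  · rintro rfl
    rw [ZMod.val_add, ZMod.val_natCast, Nat.mod_eq_of_lt hc]
  · intro h
    apply ZMod.val_injective
    rw [ZMod.val_add, ZMod.val_natCast, Nat.mod_eq_of_lt hc, h]

theorem not_adj {n : ℕ} {u v : ZMod n} (h1 : v ≠ u + 1) (h1' : u ≠ v + 1) :
    ¬ (cyc n).Adj u v := by
  simp only [cyc, SimpleGraph.fromRel_adj]
  tauto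

theorem no_common {n : ℕ} {u v : ZMod n} (hne : u ≠ v) (h2 : v ≠ u + 2) (h2' : u ≠ v + 2) :
    ∀ w, (cyc n).Adj u w → ¬ (cyc n).Adj w v := by
  intro w hw1 hw2
  simp only [cyc, SimpleGraph.fromRel_adj] at hw1 hw2
  obtain ⟨-, ha | ha⟩ := hw1 <;> obtain ⟨-, hb | hb⟩ := hw2
  · exact h2 (by rw [hb, ha]; ring)
  · exact hne (add_right_cancel (ha.symm.trans hb))
  · exact hne (ha.trans hb.symm)
  · exact h2' (by rw [ha, hb]; ring)

theorem pair (n : ℕ) (hn : 3 ≤ n) (u v : ZMod n) (hne : u ≠ v)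
    (h4 : u.val % 4 = v.val % 4)
    (hA : ¬(u.val = n-1 ∧ n % 4 ≠ 0)) (hB : ¬(v.val = n-1 ∧ n % 4 ≠ 0))
    (hr : (cyc n).Reachable u v) :
    2 ≤ (cyc n).dist u v ∧ (u.val % 4 = 1 ∨ u.val % 4 = 3 → 3 ≤ (cyc n).dist u v) := by
  haveI : NeZero n := ⟨by omega⟩
  obtain ⟨k1, k2, k3⟩ := key n u.val v.val hn (ZMod.val_lt u) (ZMod.val_lt v) h4 hA hB
  have hv1 : v ≠ u + 1 := by
    intro h; exact k1 ((addc n 1 (by omega) u v).mp (by rw [h]; norm_num))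
  have hv1' : u ≠ v + 1 := by
    intro h; exact k2 ((addc n 1 (by omega) v u).mp (by rw [h]; norm_num))
  refine ⟨two_le_dist hr hne (not_adj hv1 hv1'), fun hodd => ?_⟩
  obtain ⟨k3a, k3b⟩ := k3 hodd
  have hv2 : v ≠ u + 2 := by
    intro h; exact k3a ((addc n 2 (by omega) u v).mp (by rw [h]; norm_num))
  have hv2' : u ≠ v + 2 := by
    intro h; exact k3b ((addc n 2 (by omega) v u).mp (by rw [h]; norm_num))
  exact three_le_dist hr hne (not_adj hv1 hv1') (no_common hne hv2 hv2')

def pat : ℕ → Fin 5 := fun r =>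
  if r % 4 = 0 then 0 else if r % 4 = 1 then 2 else if r % 4 = 2 then 1 else 3

def pat4 : ℕ → Fin 4 := fun r =>
  if r % 4 = 0 then 0 else if r % 4 = 1 then 2 else if r % 4 = 2 then 1 else 3

theorem pat_ne (r : ℕ) : pat r ≠ 4 := by
  unfold pat; split_ifs <;> decide

theorem pat_inj {a b : ℕ} (h : pat a = pat b) : a % 4 = b % 4 := by
  unfold pat at h
  have : a % 4 < 4 := Nat.mod_lt _ (by norm_num)
  have : b % 4 < 4 := Nat.mod_lt _ (by norm_num)
  split_ifs at h <;> simp_all <;> omega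

theorem pat4_inj {a b : ℕ} (h : pat4 a = pat4 b) : a % 4 = b % 4 := by
  unfold pat4 at h
  have : a % 4 < 4 := Nat.mod_lt _ (by norm_num)
  have : b % 4 < 4 := Nat.mod_lt _ (by norm_num)
  split_ifs at h <;> simp_all <;> omega

def f5 (n : ℕ) : ZMod n → Fin 5 := fun i =>
  if i.val = n - 1 ∧ n % 4 ≠ 0 then 4 else pat i.val

def f4 (n : ℕ) : ZMod n → Fin 4 := fun i => pat4 i.val

end CyclePacking

open CyclePacking
/-- Every cycle `C_n` (`n ≥ 3`) is `(1,1,2,2,2)`-packing colorable, and is even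
`(1,1,2,2)`-packing colorable when `n ≡ 0 (mod 4)`. -/
theorem cycle_packing_colorable (n : ℕ) (hn : 3 ≤ n) :
    (∃ f : ZMod n → Fin 5, IsPackingColoring (cyc n) ![1, 1, 2, 2, 2] f) ∧
    (n % 4 = 0 → ∃ f : ZMod n → Fin 4, IsPackingColoring (cyc n) ![1, 1, 2, 2] f) := by
  haveI : NeZero n := ⟨by omega⟩
  constructor
  · refine ⟨f5 n, ?_⟩
    intro u v hne hf hr
    by_cases hu : (u.val = n-1 ∧ n % 4 ≠ 0) <;> by_cases hv : (v.val = n-1 ∧ n % 4 ≠ 0)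
    · exact absurd (ZMod.val_injective n (hu.1.trans hv.1.symm)) hne
    · simp only [f5, if_pos hu, if_neg hv] at hf
      exact absurd hf.symm (pat_ne _)
    · simp only [f5, if_neg hu, if_pos hv] at hf
      exact absurd hf (pat_ne _)
    · simp only [f5, if_neg hu, if_neg hv] at hf
      obtain ⟨hd2, hd3⟩ := pair n hn u v hne (pat_inj hf) hu hv hr
      have hlt : u.val % 4 < 4 := Nat.mod_lt _ (by norm_num)
      interval_cases h : u.val % 4
      · simpa [f5, hu, pat, h] using hd2
      · simpa [f5, hu, pat, h] using hd3 (Or.inl rfl)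
      · simpa [f5, hu, pat, h] using hd2
      · simpa [f5, hu, pat, h] using hd3 (Or.inr rfl)
  · intro hmod
    refine ⟨f4 n, ?_⟩
    intro u v hne hf hr
    obtain ⟨hd2, hd3⟩ := pair n hn u v hne (pat4_inj hf) (by simp [hmod]) (by simp [hmod]) hr
    have hlt : u.val % 4 < 4 := Nat.mod_lt _ (by norm_num)
    interval_cases h : u.val % 4
    · simpa [f4, pat4, h] using hd2
    · simpa [f4, pat4, h] using hd3 (Or.inl rfl)
    · simpa [f4, pat4, h] using hd2
    · simpa [f4, pat4, h] using hd3 (Or.inr rfl)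
end
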